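/- Let G be a finite abelian group and g₁, g₂ ∈ G∖{0} with 2g₁ ≠ 0, 2g₂ = 0, and 2g₁ + g₂ ≠ 0. Then the sequence S = g₁·g₂·(g₁+g₂) is zero-sum free and |Σ(S)| = 5 = |S| + |supp(S)| − 1. -/

import Mathlib

/-- Set of sums of nonempty subsequences of `S`. -/
def subSums {G : Type*} [AddCommMonoid G] (S : Multiset G) : Set G :=
  {x | ∃ T : Multiset G, T ≤ S ∧ T ≠ 0 ∧ T.sum = x}

/-- Set of sums of subsequences of `S` of length exactly `k`. -/
def sumsLen {G : Type*} [AddCommMonoid G] (k : ℕ) (S : Multiset G) : Set G :=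
  {x | ∃ T : Multiset G, T ≤ S ∧ Multiset.card T = k ∧ T.sum = x}

/-- Set of sums of subsequences of `S` of length at least `k`. -/
def sumsGe {G : Type*} [AddCommMonoid G] (k : ℕ) (S : Multiset G) : Set G :=
  {x | ∃ T : Multiset G, T ≤ S ∧ k ≤ Multiset.card T ∧ T.sum = x}

theorem stmt10 {G : Type*} [AddCommGroup G] [Fintype G] [DecidableEq G]
    (g₁ g₂ : G) (h1 : g₁ ≠ 0) (h2 : g₂ ≠ 0)
    (h3 : 2 • g₁ ≠ 0) (h4 : 2 • g₂ = 0) (h5 : 2 • g₁ + g₂ ≠ 0)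
    (S : Multiset G) (hS : S = ({g₁, g₂, g₁ + g₂} : Multiset G)) :
    (0 : G) ∉ subSums S ∧ (subSums S).ncard = 5 ∧
      (subSums S).ncard + 1 = Multiset.card S + S.toFinset.card := by
  subst hS
  have h4' : g₂ + g₂ = 0 := by simpa [two_smul] using h4
  have h3' : g₁ + g₁ ≠ 0 := by simpa [two_smul] using h3
  have h5' : g₁ + g₁ + g₂ ≠ 0 := by simpa [two_smul] using h5
  have hne12 : g₁ ≠ g₂ := by
    intro h; apply h3'; rw [h, h4']
  have hsum0 : g₁ + g₂ ≠ 0 := by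
    intro h
    apply hne12
    calc g₁ = g₁ + (g₂ + g₂) := by rw [h4', add_zero]
      _ = (g₁ + g₂) + g₂ := by rw [add_assoc]
      _ = g₂ := by rw [h, zero_add]
  -- key sum computations
  have e1 : g₂ + (g₁ + g₂) = g₁ := by
    calc g₂ + (g₁ + g₂) = g₁ + (g₂ + g₂) := by abel
      _ = g₁ := by rw [h4', add_zero]
  have e2 : g₁ + (g₂ + (g₁ + g₂)) = g₁ + g₁ := by rw [e1]
  have hkey : subSums ({g₁, g₂, g₁ + g₂} : Multiset G)
      = ↑({g₁, g₂, g₁ + g₂, g₁ + g₁ + g₂, g₁ + g₁} : Finset G) := by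
    ext x
    simp only [subSums, Set.mem_setOf_eq, Finset.coe_insert, Set.mem_insert_iff,
      Finset.coe_singleton, Set.mem_singleton_iff]
    constructor
    · rintro ⟨T, hT, hT0, rfl⟩
      have h : T ∈ Multiset.powerset ({g₁, g₂, g₁ + g₂} : Multiset G) :=
        Multiset.mem_powerset.2 hT
      simp [Multiset.powerset_cons] at h
      obtain ⟨⟨h | h⟩ | h | h⟩ | ⟨h | h⟩ | h | h := h
      · exact absurd h hT0
      · subst h; right; right; left; simp
      · rw [← h]; right; left; simp
      · rw [← h]; left; simpa using e1
      · rw [← h]; left; simp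
      · rw [← h]; right; right; right; left
        simp only [Multiset.sum_cons, Multiset.sum_singleton]
        rw [add_assoc]
      · rw [← h]; right; right; left; simp
      · rw [← h]; right; right; right; right
        simpa using e2
    · have m1 : ({g₁} : Multiset G) ≤ {g₁, g₂, g₁ + g₂} := Multiset.singleton_le.2 (by simp)
      have m2 : ({g₂} : Multiset G) ≤ {g₁, g₂, g₁ + g₂} := Multiset.singleton_le.2 (by simp)
      have m3 : ({g₁ + g₂} : Multiset G) ≤ {g₁, g₂, g₁ + g₂} :=
        Multiset.singleton_le.2 (by simp)
      have m4 : ({g₁, g₁ + g₂} : Multiset G) ≤ {g₁, g₂, g₁ + g₂} :=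
        Multiset.cons_le_cons g₁ (Multiset.le_cons_self _ _)
      rintro (h | h | h | h | h)
      · exact ⟨{g₁}, m1, by simp, by simpa using h.symm⟩
      · exact ⟨{g₂}, m2, by simp, by simpa using h.symm⟩
      · exact ⟨{g₁ + g₂}, m3, by simp, by simpa using h.symm⟩
      · refine ⟨{g₁, g₁ + g₂}, m4, by simp, ?_⟩
        simp only [Multiset.insert_eq_cons, Multiset.sum_cons, Multiset.sum_singleton]
        rw [← add_assoc, h]
      · exact ⟨{g₁, g₂, g₁ + g₂}, le_refl _, by simp, by
          simp only [Multiset.insert_eq_cons, Multiset.sum_cons, Multiset.sum_singleton]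
          rw [e2, h]⟩
  -- distinctness
  have d1 : g₁ ≠ g₁ + g₂ := fun h => h2 (left_eq_add.mp h)
  have d2 : g₂ ≠ g₁ + g₂ := fun h => h1 (right_eq_add.mp h)
  have d3 : g₁ ≠ g₁ + g₁ + g₂ := fun h =>
    hsum0 (left_eq_add.mp (by rwa [add_assoc] at h))
  have d4 : g₂ ≠ g₁ + g₁ + g₂ := fun h => h3' (right_eq_add.mp h)
  have d5 : g₁ + g₂ ≠ g₁ + g₁ + g₂ := fun h =>
    h1 (left_eq_add.mp (add_right_cancel h))
  have d6 : g₁ ≠ g₁ + g₁ := fun h => h1 (left_eq_add.mp h)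
  have d7 : g₂ ≠ g₁ + g₁ := fun h => h5' (by rw [← h, h4'])
  have d8 : g₁ + g₂ ≠ g₁ + g₁ := fun h => hne12 (add_left_cancel h).symm
  have d9 : g₁ + g₁ + g₂ ≠ g₁ + g₁ := fun h => h2 (add_eq_left.mp h)
  have hc5 : ({g₁, g₂, g₁ + g₂, g₁ + g₁ + g₂, g₁ + g₁} : Finset G).card = 5 := by
    rw [Finset.card_insert_of_notMem (by simp [hne12, d1, d3, d6]),
      Finset.card_insert_of_notMem (by simp [d2, d4, d7]),
      Finset.card_insert_of_notMem (by simp [d5, d8]),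
      Finset.card_insert_of_notMem (by simp [d9]), Finset.card_singleton]
  refine ⟨?_, ?_, ?_⟩
  · rw [hkey]
    simp only [Finset.coe_insert, Set.mem_insert_iff, Finset.coe_singleton,
      Set.mem_singleton_iff, not_or]
    exact ⟨fun h => h1 h.symm, fun h => h2 h.symm, fun h => hsum0 h.symm,
      fun h => h5' h.symm, fun h => h3' h.symm⟩
  · rw [hkey, Set.ncard_coe_finset, hc5]
  · rw [hkey, Set.ncard_coe_finset, hc5]
    have ht : ({g₁, g₂, g₁ + g₂} : Multiset G).toFinset = ({g₁, g₂, g₁ + g₂} : Finset G) := by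
      simp [Multiset.toFinset_cons]
    rw [ht, Finset.card_insert_of_notMem (by simp [hne12, d1]),
      Finset.card_insert_of_notMem (by simp [d2]), Finset.card_singleton]
    simp
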